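/- Let d ≥ 1 be an integer, C > 0, and let f, g ∈ 𝒮(ℝ^d) satisfy −Δf(x) + C|x|² f(x) = g(x) for all x ∈ ℝ^d. Then f is radial if and only if g is radial. -/

import Mathlib

open MeasureTheory

/-- A complex-valued function on `ℝ^d` is radial if it is invariant under all
orthogonal (i.e. linear isometric) transformations of `ℝ^d`. -/
def IsRadial {d : ℕ} (f : EuclideanSpace ℝ (Fin d) → ℂ) : Prop :=
  ∀ (U : EuclideanSpace ℝ (Fin d) ≃ₗᵢ[ℝ] EuclideanSpace ℝ (Fin d))
    (x : EuclideanSpace ℝ (Fin d)), f (U x) = f x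

/-- Partial derivative in the `j`-th coordinate direction of a complex-valued function. -/
noncomputable def pderivC {d : ℕ} (j : Fin d) (f : EuclideanSpace ℝ (Fin d) → ℂ) :
    EuclideanSpace ℝ (Fin d) → ℂ :=
  fun x => fderiv ℝ f x (EuclideanSpace.single j 1)

noncomputable def SchwartzMap.pderivCLM (𝕜 : Type*) [RCLike 𝕜] {E F : Type*}
    [NormedAddCommGroup E] [NormedSpace ℝ E] [NormedAddCommGroup F] [NormedSpace ℝ F]
    [NormedSpace 𝕜 F] [SMulCommClass ℝ 𝕜 F] (m : E) : SchwartzMap E F →L[𝕜] SchwartzMap E F :=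
  SchwartzMap.evalCLM 𝕜 E F m ∘L SchwartzMap.fderivCLM 𝕜 E F

theorem SchwartzMap.pderivCLM_apply (𝕜 : Type*) [RCLike 𝕜] {E F : Type*}
    [NormedAddCommGroup E] [NormedSpace ℝ E] [NormedAddCommGroup F] [NormedSpace ℝ F]
    [NormedSpace 𝕜 F] [SMulCommClass ℝ 𝕜 F] (m : E) (f : SchwartzMap E F) (x : E) :
    SchwartzMap.pderivCLM 𝕜 m f x = fderiv ℝ f x m := rfl

namespace Stmt5Aux

open SchwartzMap ComplexConjugate RealInnerProductSpace

variable {d : ℕ}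

local notation "E" => EuclideanSpace ℝ (Fin d)

lemma schwartz_htg {D V : Type*} [NormedAddCommGroup D] [NormedSpace ℝ D]
    [NormedAddCommGroup V] [NormedSpace ℝ V] (f : SchwartzMap D V) :
    Function.HasTemperateGrowth f := by
  refine ⟨f.smooth ⊤, fun n => ⟨0, SchwartzMap.seminorm ℝ 0 n f, fun x => ?_⟩⟩
  simpa using f.norm_iteratedFDeriv_le_seminorm ℝ n x

noncomputable def conjCLM : ℂ →L[ℝ] ℂ := (RCLike.conjCLE (K := ℂ)).toContinuousLinearMap

@[simp] lemma conjCLM_apply (z : ℂ) : conjCLM z = conj z := rfl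

noncomputable def mulS {D : Type*} [NormedAddCommGroup D] [NormedSpace ℝ D]
    (u v : SchwartzMap D ℂ) : SchwartzMap D ℂ :=
  SchwartzMap.bilinLeftCLM (ContinuousLinearMap.mul ℝ ℂ) (schwartz_htg v) u

@[simp] lemma mulS_apply {D : Type*} [NormedAddCommGroup D] [NormedSpace ℝ D]
    (u v : SchwartzMap D ℂ) (x : D) : mulS u v x = u x * v x := rfl

noncomputable def conjS {D : Type*} [NormedAddCommGroup D] [NormedSpace ℝ D]
    (v : SchwartzMap D ℂ) : SchwartzMap D ℂ :=
  SchwartzMap.bilinLeftCLM ((ContinuousLinearMap.mul ℝ ℂ).comp conjCLM)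
    (Function.HasTemperateGrowth.const (1:ℂ)) v

@[simp] lemma conjS_apply {D : Type*} [NormedAddCommGroup D] [NormedSpace ℝ D]
    (v : SchwartzMap D ℂ) (x : D) : conjS v x = conj (v x) := by
  show (conj (v x)) * 1 = conj (v x); ring

/-- Integral of a directional derivative of a Schwartz function vanishes. -/
lemma integral_fderiv_eq_zero (φ : SchwartzMap E ℂ) (v : E) :
    ∫ x : E, fderiv ℝ φ x v = 0 := by
  have hcoe : ⇑(SchwartzMap.fderivCLM ℝ E ℂ φ) = fderiv ℝ ⇑φ :=
    funext fun x => SchwartzMap.fderivCLM_apply ℝ φ x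
  have hint : Integrable (fderiv ℝ ⇑φ) volume := by
    rw [← hcoe]; exact (SchwartzMap.fderivCLM ℝ E ℂ φ).integrable
  have h := Real.fourier_fderiv φ.integrable φ.differentiable hint
  have h0 := congrFun h 0
  rw [Real.fourier_eq] at h0
  simp only [inner_zero_right, neg_zero, map_zero, AddChar.map_zero_eq_one, one_smul] at h0
  have hR : VectorFourier.fourierSMulRight (-(innerSL ℝ)) (FourierTransform.fourier ⇑φ) 0 = 0 := by
    simp only [VectorFourier.fourierSMulRight, map_zero, smul_eq_zero]
    right; ext w; simp
  rw [hR] at h0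
  have := congrArg (fun (L : (EuclideanSpace ℝ (Fin d)) →L[ℝ] ℂ) => L v) h0
  simpa [ContinuousLinearMap.integral_apply hint] using this

/-- Integration by parts for Schwartz functions. -/
lemma integral_pderiv_mul (u w : SchwartzMap E ℂ) (v : E) :
    ∫ x : E, fderiv ℝ u x v * w x = - ∫ x : E, u x * fderiv ℝ w x v := by
  have hker : ∀ x : E, fderiv ℝ (mulS u w) x v
      = u x * fderiv ℝ w x v + fderiv ℝ u x v * w x := by
    intro x
    have hco : ⇑(mulS u w) = fun y => u y * w y := funext fun y => rfl
    rw [hco, fderiv_fun_mul u.differentiableAt w.differentiableAt]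
    simp [smul_eq_mul]
    ring
  have h0 := integral_fderiv_eq_zero (mulS u w) v
  have hint1 : Integrable (fun x : E => u x * fderiv ℝ w x v) volume := by
    have : (fun x : E => u x * fderiv ℝ w x v) = ⇑(mulS u (pderivCLM ℝ v w)) := by
      funext x; simp [SchwartzMap.pderivCLM_apply]
    rw [this]; exact (mulS u (pderivCLM ℝ v w)).integrable
  have hint2 : Integrable (fun x : E => fderiv ℝ u x v * w x) volume := by
    have : (fun x : E => fderiv ℝ u x v * w x) = ⇑(mulS (pderivCLM ℝ v u) w) := by
      funext x; simp [SchwartzMap.pderivCLM_apply]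
    rw [this]; exact (mulS (pderivCLM ℝ v u) w).integrable
  rw [funext hker, integral_add hint1 hint2] at h0
  linear_combination h0

lemma trace_bilin_inv (B : E →L[ℝ] E →L[ℝ] ℂ) (b c : OrthonormalBasis (Fin d) ℝ E) :
    ∑ i, B (c i) (c i) = ∑ i, B (b i) (b i) := by
  have hr : ∀ x y : E, B x y = ∑ k, ⟪b k, y⟫ • B x (b k) := by
    intro x y
    conv_lhs => rw [← b.sum_repr' y]
    rw [map_sum]
    exact Finset.sum_congr rfl fun k _ => (B x).map_smul _ _
  have hl : ∀ (a : Fin d → ℝ) (w : E), B (∑ i, a i • c i) w = ∑ i, a i • B (c i) w := by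
    intro a w
    rw [map_sum]
    simp only [ContinuousLinearMap.coe_sum', Finset.sum_apply]
    exact Finset.sum_congr rfl fun i _ => by rw [_root_.map_smul]; rfl
  calc ∑ i, B (c i) (c i)
      = ∑ i, ∑ k, ⟪b k, c i⟫ • B (c i) (b k) :=
        Finset.sum_congr rfl fun i _ => hr _ _
    _ = ∑ k, B (∑ i, ⟪b k, c i⟫ • c i) (b k) := by
        rw [Finset.sum_comm]
        exact Finset.sum_congr rfl fun k _ => (hl _ _).symm
    _ = ∑ k, B (b k) (b k) := by
        refine Finset.sum_congr rfl fun k _ => ?_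
        have hbk : (∑ i, ⟪b k, c i⟫ • c i) = b k := by
          calc ∑ i, ⟪b k, c i⟫ • c i = ∑ i, ⟪c i, b k⟫ • c i := by
                simp_rw [real_inner_comm]
            _ = b k := c.sum_repr' (b k)
        rw [hbk]

lemma fderiv_Psi (φ : SchwartzMap E ℂ) : Differentiable ℝ (fderiv ℝ ⇑φ) :=
  (φ.smooth'.fderiv_right (m := ((⊤:ℕ∞) : WithTop ℕ∞)) (by simp)).differentiable (by simp)

lemma fderiv_eval (φ : SchwartzMap E ℂ) (y v w : E) :
    fderiv ℝ (fun z => fderiv ℝ (⇑φ) z w) y v = fderiv ℝ (fderiv ℝ ⇑φ) y v w := by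
  have h : HasFDerivAt (fun z => fderiv ℝ (⇑φ) z w)
      ((ContinuousLinearMap.apply ℝ ℂ w).comp (fderiv ℝ (fderiv ℝ ⇑φ) y)) y :=
    (ContinuousLinearMap.apply ℝ ℂ w).hasFDerivAt.comp y ((fderiv_Psi φ y).hasFDerivAt)
  rw [h.fderiv]; rfl

lemma pderiv_pderiv (φ : SchwartzMap E ℂ) (y v : E) :
    pderivCLM ℝ v (pderivCLM ℝ v φ) y = fderiv ℝ (fderiv ℝ ⇑φ) y v v := by
  rw [SchwartzMap.pderivCLM_apply]
  have hco : ⇑(pderivCLM ℝ v φ) = fun z => fderiv ℝ (⇑φ) z v :=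
    funext fun z => SchwartzMap.pderivCLM_apply ℝ v φ z
  rw [hco, fderiv_eval]

noncomputable def compU (U : E ≃ₗᵢ[ℝ] E) (φ : SchwartzMap E ℂ) : SchwartzMap E ℂ :=
  SchwartzMap.compCLMOfContinuousLinearEquiv ℝ U.toContinuousLinearEquiv φ

lemma compU_apply (U : E ≃ₗᵢ[ℝ] E) (φ : SchwartzMap E ℂ) (x : E) :
    compU U φ x = φ (U x) := rfl

lemma hasFDerivAt_U (U : E ≃ₗᵢ[ℝ] E) (x : E) :
    HasFDerivAt (⇑U) (U.toContinuousLinearEquiv : E →L[ℝ] E) x := by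
  have := U.toContinuousLinearEquiv.hasFDerivAt (x := x)
  simpa using this

lemma pderiv_comp (U : E ≃ₗᵢ[ℝ] E) (φ : SchwartzMap E ℂ) (v : E) :
    ⇑(pderivCLM ℝ v (compU U φ)) = fun z => fderiv ℝ (⇑φ) (U z) (U v) := by
  funext z
  rw [SchwartzMap.pderivCLM_apply]
  have hco : ⇑(compU U φ) = ⇑φ ∘ ⇑U := rfl
  rw [hco]
  rw [fderiv_comp z φ.differentiableAt (hasFDerivAt_U U z).differentiableAt]
  rw [(hasFDerivAt_U U z).fderiv]
  rfl

lemma pderiv_pderiv_comp (U : E ≃ₗᵢ[ℝ] E) (φ : SchwartzMap E ℂ) (x v : E) :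
    pderivCLM ℝ v (pderivCLM ℝ v (compU U φ)) x
      = fderiv ℝ (fderiv ℝ ⇑φ) (U x) (U v) (U v) := by
  rw [SchwartzMap.pderivCLM_apply, pderiv_comp]
  have hh : HasFDerivAt (fun z => fderiv ℝ (⇑φ) (U z) (U v))
      ((ContinuousLinearMap.apply ℝ ℂ (U v)).comp
        ((fderiv ℝ (fderiv ℝ ⇑φ) (U x)).comp (U.toContinuousLinearEquiv : E →L[ℝ] E))) x :=
    (ContinuousLinearMap.apply ℝ ℂ (U v)).hasFDerivAt.comp x
      (((fderiv_Psi φ (U x)).hasFDerivAt).comp x (hasFDerivAt_U U x))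
  rw [hh.fderiv]
  rfl

lemma sum_pderiv_comp (U : E ≃ₗᵢ[ℝ] E) (φ : SchwartzMap E ℂ) (x : E) :
    ∑ j : Fin d, pderivCLM ℝ (EuclideanSpace.single j 1)
        (pderivCLM ℝ (EuclideanSpace.single j 1) (compU U φ)) x
      = ∑ j : Fin d, pderivCLM ℝ (EuclideanSpace.single j 1)
        (pderivCLM ℝ (EuclideanSpace.single j 1) φ) (U x) := by
  simp_rw [pderiv_pderiv_comp, pderiv_pderiv]
  have := trace_bilin_inv (fderiv ℝ (fderiv ℝ ⇑φ) (U x))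
    (EuclideanSpace.basisFun (Fin d) ℝ) ((EuclideanSpace.basisFun (Fin d) ℝ).map U)
  simpa [OrthonormalBasis.map_apply, EuclideanSpace.basisFun_apply] using this

lemma fderiv_conjS (h : SchwartzMap E ℂ) (x v : E) :
    fderiv ℝ (⇑(conjS h)) x v = conj (fderiv ℝ (⇑h) x v) := by
  have hco : ⇑(conjS h) = ⇑conjCLM ∘ ⇑h := funext fun y => by simp
  rw [hco, fderiv_comp x conjCLM.differentiableAt h.differentiableAt, conjCLM.fderiv]
  rfl

lemma claim1 (h : SchwartzMap E ℂ) (v : E) :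
    ∫ x : E, (pderivCLM ℝ v (pderivCLM ℝ v h)) x * conj (h x)
      = -((∫ x : E, Complex.normSq ((pderivCLM ℝ v h) x) : ℝ) : ℂ) := by
  have h1 : ∀ x : E, (pderivCLM ℝ v (pderivCLM ℝ v h)) x * conj (h x)
      = fderiv ℝ (⇑(pderivCLM ℝ v h)) x v * (conjS h) x := by
    intro x; rw [SchwartzMap.pderivCLM_apply]; simp
  simp_rw [h1]
  rw [integral_pderiv_mul (pderivCLM ℝ v h) (conjS h) v]
  have h2 : ∀ x : E, (pderivCLM ℝ v h) x * fderiv ℝ (⇑(conjS h)) x v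
      = ((Complex.normSq ((pderivCLM ℝ v h) x) : ℝ) : ℂ) := by
    intro x
    rw [fderiv_conjS]
    rw [show fderiv ℝ (⇑h) x v = (pderivCLM ℝ v h) x from (SchwartzMap.pderivCLM_apply ℝ v h x).symm]
    exact Complex.mul_conj _
  simp_rw [h2]
  rw [neg_inj]; exact integral_ofReal

lemma zero_of_ho (hd : 1 ≤ d) {C : ℝ} (hC : 0 < C) (h : SchwartzMap E ℂ)
    (heq : ∀ x : E, -(∑ j : Fin d, pderivCLM ℝ (EuclideanSpace.single j 1)
        (pderivCLM ℝ (EuclideanSpace.single j 1) h) x)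
      + (C : ℂ) * (‖x‖^2 : ℝ) * h x = 0) :
    ∀ x : E, h x = 0 := by
  classical
  set G := mulS h (conjS h) with hG
  have hGx : ∀ x : E, G x = ((Complex.normSq (h x) : ℝ) : ℂ) := by
    intro x; simp [hG, Complex.mul_conj]
  -- the potential part as a function
  set F : E → ℂ := fun x => (C : ℂ) * ((‖x‖^2 : ℝ) : ℂ) * G x with hF
  have hGnorm : ∀ x : E, ‖G x‖ = Complex.normSq (h x) := by
    intro x; rw [hGx]; simp [Complex.normSq_nonneg, abs_of_nonneg]
  have hFint : Integrable F volume := by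
    have hgi : Integrable (fun x : E => |C| * (‖x‖^2 * ‖G x‖)) volume :=
      (G.integrable_pow_mul volume 2).const_mul _
    refine Integrable.mono' hgi ?_ ?_
    · exact Continuous.aestronglyMeasurable (by fun_prop)
    · refine Filter.Eventually.of_forall fun x => ?_
      rw [hF]
      simp only [norm_mul, Complex.norm_real]
      rw [Real.norm_eq_abs, Real.norm_eq_abs, abs_of_nonneg (by positivity : (0:ℝ) ≤ ‖x‖^2)]
      ring_nf
      exact le_of_eq (by ring)
  -- the total integral identity
  have hPPint : ∀ j : Fin d, Integrable (fun x : E =>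
      -((pderivCLM ℝ (EuclideanSpace.single j 1)
        ((pderivCLM ℝ (EuclideanSpace.single j 1)) h)) x * conj (h x))) volume := by
    intro j
    have : (fun x : E => -((pderivCLM ℝ (EuclideanSpace.single j 1)
        ((pderivCLM ℝ (EuclideanSpace.single j 1)) h)) x * conj (h x)))
        = fun x => -(mulS ((pderivCLM ℝ (EuclideanSpace.single j 1))
          ((pderivCLM ℝ (EuclideanSpace.single j 1)) h)) (conjS h) x) := by
      funext x; simp
    rw [this]
    exact ((mulS _ (conjS h)).integrable).neg
  have hzero : (0:ℂ) = (∑ j : Fin d, ∫ x : E,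
      -((pderivCLM ℝ (EuclideanSpace.single j 1)
        ((pderivCLM ℝ (EuclideanSpace.single j 1)) h)) x * conj (h x)))
      + ∫ x : E, F x := by
    have hexp : ∀ x : E, (∑ j : Fin d,
        -((pderivCLM ℝ (EuclideanSpace.single j 1)
          ((pderivCLM ℝ (EuclideanSpace.single j 1)) h)) x * conj (h x))) + F x = 0 := by
      intro x
      have h0 := heq x
      have : (∑ j : Fin d, -((pderivCLM ℝ (EuclideanSpace.single j 1)
          ((pderivCLM ℝ (EuclideanSpace.single j 1)) h)) x * conj (h x))) + F x
          = (-(∑ j : Fin d, ((pderivCLM ℝ (EuclideanSpace.single j 1))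
            ((pderivCLM ℝ (EuclideanSpace.single j 1)) h)) x)
            + (C : ℂ) * ((‖x‖^2 : ℝ) : ℂ) * h x) * conj (h x) := by
        simp only [hF, hG, mulS_apply, conjS_apply]
        rw [Finset.sum_neg_distrib]
        ring_nf
        rw [← Finset.sum_mul]
        ring
      rw [this, h0, zero_mul]
    have : ∫ x : E, ((∑ j : Fin d,
        -((pderivCLM ℝ (EuclideanSpace.single j 1)
          ((pderivCLM ℝ (EuclideanSpace.single j 1)) h)) x * conj (h x))) + F x) = 0 := by
      simp_rw [hexp]; simp
    rw [integral_add (integrable_finset_sum _ (fun j _ => hPPint j)) hFint,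
      integral_finset_sum _ (fun j _ => hPPint j)] at this
    exact this.symm
  -- rewrite the second-derivative integrals via integration by parts
  have hqval : ∀ j : Fin d, ∫ x : E,
      -((pderivCLM ℝ (EuclideanSpace.single j 1)
        ((pderivCLM ℝ (EuclideanSpace.single j 1)) h)) x * conj (h x))
      = ((∫ x : E, Complex.normSq ((pderivCLM ℝ (EuclideanSpace.single j 1) h) x) : ℝ) : ℂ) := by
    intro j
    rw [integral_neg, claim1, neg_neg]
  set r : E → ℝ := fun x => ‖x‖^2 * Complex.normSq (h x) with hr
  have hrint : Integrable r volume := by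
    have : r = fun x : E => ‖x‖^2 * ‖G x‖ := by
      funext x; simp only [hr]; rw [hGnorm]
    rw [this]
    exact G.integrable_pow_mul volume 2
  have hFval : ∫ x : E, F x = ((C * ∫ x : E, r x : ℝ) : ℂ) := by
    have hFx : ∀ x : E, F x = ((C * r x : ℝ) : ℂ) := by
      intro x; simp only [hF, hr]; rw [hGx]; push_cast; ring
    simp_rw [hFx]
    have h1 : ∫ x : E, ((C * r x : ℝ) : ℂ) = ((∫ x : E, C * r x : ℝ) : ℂ) := integral_ofReal
    rw [h1, integral_const_mul]
  rw [hFval] at hzero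
  simp_rw [hqval] at hzero
  rw [← Complex.ofReal_sum] at hzero
  rw [← Complex.ofReal_add] at hzero
  have hreal : (∑ j : Fin d, ∫ x : E,
      Complex.normSq ((pderivCLM ℝ (EuclideanSpace.single j 1) h) x)) + C * ∫ x : E, r x = 0 := by
    exact_mod_cast hzero.symm
  have hsnn : 0 ≤ ∑ j : Fin d, ∫ x : E,
      Complex.normSq ((pderivCLM ℝ (EuclideanSpace.single j 1) h) x) :=
    Finset.sum_nonneg fun j _ => integral_nonneg fun x => Complex.normSq_nonneg _
  have hrnn : 0 ≤ ∫ x : E, r x := integral_nonneg fun x => by simp only [hr]; exact mul_nonneg (by positivity) (Complex.normSq_nonneg _)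
  have hCr : C * ∫ x : E, r x = 0 := by nlinarith
  have hrzero : ∫ x : E, r x = 0 := by
    rcases mul_eq_zero.mp hCr with h1 | h1
    · exact absurd h1 hC.ne'
    · exact h1
  have hrae : r =ᵐ[volume] 0 :=
    (integral_eq_zero_iff_of_nonneg (fun x => by simp only [hr, Pi.zero_apply]; exact mul_nonneg (by positivity) (Complex.normSq_nonneg _)) hrint).mp hrzero
  have hrc : Continuous r := by
    exact (continuous_norm.pow 2).mul (Complex.continuous_normSq.comp h.continuous)
  have hrall : ∀ x : E, r x = 0 := fun x =>
    congrFun ((hrc.ae_eq_iff_eq volume continuous_zero).mp hrae) x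
  have hne : ∀ x : E, x ≠ 0 → h x = 0 := by
    intro x hx
    have := hrall x
    rw [hr] at this
    have hnorm : ‖x‖^2 ≠ 0 := pow_ne_zero 2 (norm_ne_zero_iff.mpr hx)
    have : Complex.normSq (h x) = 0 := by
      rcases mul_eq_zero.mp this with h1 | h1
      · exact absurd h1 hnorm
      · exact h1
    exact Complex.normSq_eq_zero.mp this
  haveI : Nonempty (Fin d) := ⟨⟨0, hd⟩⟩
  haveI hnt : Nontrivial (EuclideanSpace ℝ (Fin d)) := by
    refine ⟨⟨EuclideanSpace.single ⟨0, hd⟩ (1:ℝ), 0, ?_⟩⟩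
    intro hcontra
    have := congrFun (congrArg (fun (y : EuclideanSpace ℝ (Fin d)) => (y : Fin d → ℝ)) hcontra) ⟨0, hd⟩
    simp [EuclideanSpace.single_apply] at this
  have hdense : Dense ({(0:EuclideanSpace ℝ (Fin d))}ᶜ) := dense_compl_singleton _
  have hext : ⇑h = fun _ => (0:ℂ) :=
    Continuous.ext_on hdense h.continuous continuous_const fun x hx => hne x hx
  exact fun x => congrFun hext x

end Stmt5Aux

open SchwartzMap Stmt5Aux in
theorem stmt5 (d : ℕ) (hd : 1 ≤ d) (C : ℝ) (hC : 0 < C)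
    (f g : SchwartzMap (EuclideanSpace ℝ (Fin d)) ℂ)
    (hfg : ∀ x : EuclideanSpace ℝ (Fin d),
      -(∑ j : Fin d, pderivC j (pderivC j (f : EuclideanSpace ℝ (Fin d) → ℂ)) x)
        + (C : ℂ) * (‖x‖^2 : ℝ) * f x = g x) :
    IsRadial (f : EuclideanSpace ℝ (Fin d) → ℂ) ↔ IsRadial (g : EuclideanSpace ℝ (Fin d) → ℂ) := by
  -- rewrite the hypothesis in terms of Schwartz-space partial derivative operators
  have hP : ∀ (φ : SchwartzMap (EuclideanSpace ℝ (Fin d)) ℂ) (j : Fin d)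
      (x : EuclideanSpace ℝ (Fin d)), pderivC j (pderivC j ⇑φ) x
      = pderivCLM ℝ (EuclideanSpace.single j 1) (pderivCLM ℝ (EuclideanSpace.single j 1) φ) x := by
    intro φ j x
    show fderiv ℝ (pderivC j ⇑φ) x (EuclideanSpace.single j 1) = _
    have hco : pderivC j ⇑φ = ⇑(pderivCLM ℝ (EuclideanSpace.single j 1) φ) :=
      funext fun y => (SchwartzMap.pderivCLM_apply ℝ _ φ y).symm
    rw [hco]
    exact (SchwartzMap.pderivCLM_apply ℝ _ _ x).symm
  have hfgP : ∀ x : EuclideanSpace ℝ (Fin d),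
      -(∑ j : Fin d, pderivCLM ℝ (EuclideanSpace.single j 1)
          (pderivCLM ℝ (EuclideanSpace.single j 1) f) x)
        + (C : ℂ) * ((‖x‖^2 : ℝ) : ℂ) * f x = g x := by
    intro x
    rw [← hfg x]
    simp_rw [hP f]
  -- key identity: the harmonic oscillator applied to `f ∘ U`
  have key : ∀ (U : EuclideanSpace ℝ (Fin d) ≃ₗᵢ[ℝ] EuclideanSpace ℝ (Fin d))
      (x : EuclideanSpace ℝ (Fin d)),
      -(∑ j : Fin d, pderivCLM ℝ (EuclideanSpace.single j 1)
          (pderivCLM ℝ (EuclideanSpace.single j 1) (compU U f)) x)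
        + (C : ℂ) * ((‖x‖^2 : ℝ) : ℂ) * (compU U f) x = g (U x) := by
    intro U x
    rw [sum_pderiv_comp U f x, compU_apply]
    rw [show (‖x‖ : ℝ) = ‖U x‖ from (U.norm_map x).symm]
    exact hfgP (U x)
  constructor
  · intro hf U x
    have hfU : compU U f = f := SchwartzMap.ext fun y => by rw [compU_apply]; exact hf U y
    have h1 := key U x
    rw [hfU] at h1
    rw [← h1]
    exact hfgP x
  · intro hg U x
    set h : SchwartzMap (EuclideanSpace ℝ (Fin d)) ℂ := compU U f - f with hdef
    have hh : ∀ y : EuclideanSpace ℝ (Fin d),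
        -(∑ j : Fin d, pderivCLM ℝ (EuclideanSpace.single j 1)
            (pderivCLM ℝ (EuclideanSpace.single j 1) h) y)
          + (C : ℂ) * ((‖y‖^2 : ℝ) : ℂ) * h y = 0 := by
      intro y
      have hsplit : ∀ j : Fin d, pderivCLM ℝ (EuclideanSpace.single j 1)
          (pderivCLM ℝ (EuclideanSpace.single j 1) h) y
          = pderivCLM ℝ (EuclideanSpace.single j 1)
              (pderivCLM ℝ (EuclideanSpace.single j 1) (compU U f)) y
            - pderivCLM ℝ (EuclideanSpace.single j 1)
              (pderivCLM ℝ (EuclideanSpace.single j 1) f) y := by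
        intro j
        rw [hdef]
        simp only [map_sub, SchwartzMap.sub_apply]
      have hhy : h y = (compU U f) y - f y := by rw [hdef]; simp
      have h1 := key U y
      have h2 := hfgP y
      have h3 := hg U y
      simp_rw [hsplit, hhy, Finset.sum_sub_distrib]
      ring_nf
      ring_nf at h1 h2
      linear_combination h1 - h2 + h3
    have hz := zero_of_ho hd hC h hh
    have := hz x
    rw [hdef] at this
    simpa [compU_apply, sub_eq_zero] using this
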